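/- The rewrite relation on finite sets of ground type-class constraints generated by the four CHR rules arising from the Haskell Eq/Ord class and instance declarations — namely the propagation rule (if ord t is in the set and eq t is not, add eq t) and the simplification rules (remove ord Int; remove eq Int; replace ord (List t) by ord t; replace eq (List t) by eq t) — is confluent: whenever a set S rewrites in zero or more steps to both S₁ and S₂, there exists a set S₃ such that S₁ and S₂ each rewrite in zero or more steps to S₃. -/

import Mathlib

namespace CHR

/-- Ground Haskell types. -/
inductive Ty : Type
  | int : Ty
  | list : Ty → Ty
  | var : ℕ → Ty
  deriving DecidableEq

/-- Type-class constraints. -/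
inductive Con : Type
  | eq : Ty → Con
  | ord : Ty → Con
  deriving DecidableEq

/-- One-step rewrite relation generated by the four CHR rules arising from
the Haskell `Eq`/`Ord` class and instance declarations. -/
inductive Step : Finset Con → Finset Con → Prop
  /-- `class Eq a => Ord a` -/
  | prop (S : Finset Con) (t : Ty) :
      Con.ord t ∈ S → Con.eq t ∉ S → Step S (insert (Con.eq t) S)
  /-- `instance Ord Int` -/
  | ordInt (S : Finset Con) :
      Con.ord Ty.int ∈ S → Step S (S.erase (Con.ord Ty.int))
  /-- `instance Eq Int` -/
  | eqInt (S : Finset Con) :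
      Con.eq Ty.int ∈ S → Step S (S.erase (Con.eq Ty.int))
  /-- `instance Ord a => Ord [a]` -/
  | ordList (S : Finset Con) (t : Ty) :
      Con.ord (Ty.list t) ∈ S →
      Step S (insert (Con.ord t) (S.erase (Con.ord (Ty.list t))))
  /-- `instance Eq a => Eq [a]` -/
  | eqList (S : Finset Con) (t : Ty) :
      Con.eq (Ty.list t) ∈ S →
      Step S (insert (Con.eq t) (S.erase (Con.eq (Ty.list t))))

/-- The base variable of a type, if any. -/
def tyBase : Ty → Option ℕ
  | .int => none
  | .list t => tyBase t
  | .var n => some n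

/-- Normal-form contribution of a single constraint. -/
def nfCon : Con → Finset Con
  | .eq t => match tyBase t with
    | none => ∅
    | some n => {Con.eq (Ty.var n)}
  | .ord t => match tyBase t with
    | none => ∅
    | some n => {Con.ord (Ty.var n), Con.eq (Ty.var n)}

/-- Normal form of a constraint set. -/
def NF (S : Finset Con) : Finset Con := S.biUnion nfCon

def tySize : Ty → ℕ
  | .int => 1
  | .list t => tySize t + 1
  | .var _ => 0

def conSize : Con → ℕ
  | .eq t => tySize t
  | .ord t => tySize t

def mu (S : Finset Con) : ℕ := S.sum conSize

lemma tySize_eq_zero {t : Ty} (h : tySize t = 0) : ∃ n, t = Ty.var n := by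
  cases t <;> simp_all [tySize]

lemma conSize_nfCon {c d : Con} (hd : d ∈ nfCon c) : conSize d = 0 := by
  cases c with
  | eq t =>
    rcases h : tyBase t with _ | n <;> simp [nfCon, h] at hd
    subst hd; rfl
  | ord t =>
    rcases h : tyBase t with _ | n <;> simp [nfCon, h] at hd
    rcases hd with rfl | rfl <;> rfl

lemma conSize_NF {S : Finset Con} {d : Con} (hd : d ∈ NF S) : conSize d = 0 := by
  obtain ⟨c, _, hdc⟩ := Finset.mem_biUnion.mp hd
  exact conSize_nfCon hdc

lemma NF_insert (c : Con) (S : Finset Con) :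
    NF (insert c S) = nfCon c ∪ NF S := Finset.biUnion_insert ..

lemma NF_erase {c : Con} {S : Finset Con} (h : c ∈ S) :
    NF S = nfCon c ∪ NF (S.erase c) := by
  conv_lhs => rw [← Finset.insert_erase h]
  exact NF_insert ..

lemma nfCon_eq_subset_ord (t : Ty) : nfCon (Con.eq t) ⊆ nfCon (Con.ord t) := by
  rcases h : tyBase t with _ | n <;> simp [nfCon, h, Finset.singleton_subset_iff]

lemma nfCon_ord_list (t : Ty) : nfCon (Con.ord (Ty.list t)) = nfCon (Con.ord t) := rfl

lemma nfCon_eq_list (t : Ty) : nfCon (Con.eq (Ty.list t)) = nfCon (Con.eq t) := rfl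

lemma nfCon_subset_NF {c : Con} {S : Finset Con} (h : c ∈ S) : nfCon c ⊆ NF S :=
  Finset.subset_biUnion_of_mem nfCon h

/-- One step does not change the normal form. -/
lemma NF_step {S T : Finset Con} (h : Step S T) : NF T = NF S := by
  cases h with
  | prop t h1 h2 =>
    rw [NF_insert]
    exact Finset.union_eq_right.mpr
      ((nfCon_eq_subset_ord t).trans (nfCon_subset_NF h1))
  | ordInt h1 =>
    rw [NF_erase h1]
    simp [nfCon, tyBase]
  | eqInt h1 =>
    rw [NF_erase h1]
    simp [nfCon, tyBase]
  | ordList t h1 =>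
    rw [NF_insert, NF_erase h1, nfCon_ord_list]
  | eqList t h1 =>
    rw [NF_insert, NF_erase h1, nfCon_eq_list]

lemma NF_rtc {S T : Finset Con} (h : Relation.ReflTransGen Step S T) : NF T = NF S := by
  induction h with
  | refl => rfl
  | tail _ hstep ih => rw [NF_step hstep, ih]

lemma self_mem_nfCon {c : Con} (h : conSize c = 0) : c ∈ nfCon c := by
  cases c with
  | eq t =>
    obtain ⟨n, rfl⟩ := tySize_eq_zero h
    simp [nfCon, tyBase]
  | ord t =>
    obtain ⟨n, rfl⟩ := tySize_eq_zero h
    simp [nfCon, tyBase]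

lemma sum_insert_le' {a : Con} {s : Finset Con} :
    (insert a s).sum conSize ≤ conSize a + s.sum conSize := by
  by_cases h : a ∈ s
  · rw [Finset.insert_eq_self.mpr h]; omega
  · rw [Finset.sum_insert h]

/-- If `S` is not its own normal form, some step strictly decreases the measure. -/
lemma progress (S : Finset Con) (hne : S ≠ NF S) :
    ∃ T, Step S T ∧ mu T + (NF S \ T).card < mu S + (NF S \ S).card := by
  by_cases hz : ∀ c ∈ S, conSize c = 0
  · -- only variable constraints: use propagation
    have hsub : S ⊆ NF S := fun c hc =>
      nfCon_subset_NF hc (self_mem_nfCon (hz c hc))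
    obtain ⟨d, hdNF, hdS⟩ := Finset.exists_of_ssubset (lt_of_le_of_ne hsub hne)
    obtain ⟨c, hcS, hdc⟩ := Finset.mem_biUnion.mp hdNF
    have hc0 : conSize c = 0 := hz c hcS
    -- identify c and d
    have : ∃ n, c = Con.ord (Ty.var n) ∧ d = Con.eq (Ty.var n) := by
      cases c with
      | eq t =>
        obtain ⟨n, rfl⟩ := tySize_eq_zero hc0
        simp [nfCon, tyBase] at hdc
        exact absurd (hdc ▸ hcS) hdS
      | ord t =>
        obtain ⟨n, rfl⟩ := tySize_eq_zero hc0
        simp [nfCon, tyBase] at hdc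
        rcases hdc with rfl | rfl
        · exact absurd hcS hdS
        · exact ⟨n, rfl, rfl⟩
    obtain ⟨n, rfl, rfl⟩ := this
    refine ⟨insert (Con.eq (Ty.var n)) S, Step.prop S (Ty.var n) hcS hdS, ?_⟩
    have hmu : mu (insert (Con.eq (Ty.var n)) S) = mu S := by
      rw [mu, Finset.sum_insert hdS]
      simp [mu, conSize, tySize]
      rfl
    have hcard : (NF S \ insert (Con.eq (Ty.var n)) S).card < (NF S \ S).card := by
      rw [Finset.sdiff_insert]
      exact Finset.card_erase_lt_of_mem (Finset.mem_sdiff.mpr ⟨hdNF, hdS⟩)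
    omega
  · -- some constraint with nonzero size: simplify it
    push_neg at hz
    obtain ⟨c, hcS, hc0⟩ := hz
    have hcNF : c ∉ NF S := fun h => hc0 (conSize_NF h)
    have hmuer : mu (S.erase c) + conSize c = mu S := Finset.sum_erase_add S conSize hcS
    -- a generic helper for the card part
    have hcard : ∀ T : Finset Con, S.erase c ⊆ T →
        (NF S \ T).card ≤ (NF S \ S).card := by
      intro T hT
      apply Finset.card_le_card
      intro x hx
      rw [Finset.mem_sdiff] at hx ⊢
      refine ⟨hx.1, fun hxS => hx.2 (hT ?_)⟩
      exact Finset.mem_erase.mpr ⟨fun h => hcNF (h ▸ hx.1), hxS⟩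
    cases c with
    | eq t =>
      have ht : tySize t ≠ 0 := hc0
      cases t with
      | int =>
        refine ⟨S.erase (Con.eq Ty.int), Step.eqInt S hcS, ?_⟩
        have := hcard (S.erase (Con.eq Ty.int)) (le_refl _)
        have h1 : conSize (Con.eq Ty.int) = 1 := rfl
        omega
      | list u =>
        refine ⟨insert (Con.eq u) (S.erase (Con.eq (Ty.list u))),
          Step.eqList S u hcS, ?_⟩
        have hmuT : mu (insert (Con.eq u) (S.erase (Con.eq (Ty.list u)))) ≤
            conSize (Con.eq u) + mu (S.erase (Con.eq (Ty.list u))) :=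
          sum_insert_le'
        have := hcard (insert (Con.eq u) (S.erase (Con.eq (Ty.list u))))
          (Finset.subset_insert _ _)
        have h1 : conSize (Con.eq (Ty.list u)) = conSize (Con.eq u) + 1 := rfl
        omega
      | var n => exact absurd rfl ht
    | ord t =>
      have ht : tySize t ≠ 0 := hc0
      cases t with
      | int =>
        refine ⟨S.erase (Con.ord Ty.int), Step.ordInt S hcS, ?_⟩
        have := hcard (S.erase (Con.ord Ty.int)) (le_refl _)
        have h1 : conSize (Con.ord Ty.int) = 1 := rfl
        omega
      | list u =>
        refine ⟨insert (Con.ord u) (S.erase (Con.ord (Ty.list u))),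
          Step.ordList S u hcS, ?_⟩
        have hmuT : mu (insert (Con.ord u) (S.erase (Con.ord (Ty.list u)))) ≤
            conSize (Con.ord u) + mu (S.erase (Con.ord (Ty.list u))) :=
          sum_insert_le'
        have := hcard (insert (Con.ord u) (S.erase (Con.ord (Ty.list u))))
          (Finset.subset_insert _ _)
        have h1 : conSize (Con.ord (Ty.list u)) = conSize (Con.ord u) + 1 := rfl
        omega
      | var n => exact absurd rfl ht

lemma toNF_aux : ∀ n S, mu S + (NF S \ S).card = n → Relation.ReflTransGen Step S (NF S) := by
  intro n
  induction n using Nat.strong_induction_on with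
  | _ n ih =>
    intro S hn
    by_cases hS : S = NF S
    · exact hS ▸ Relation.ReflTransGen.refl
    · obtain ⟨T, hST, hlt⟩ := progress S hS
      have hNF : NF T = NF S := NF_step hST
      have hT : Relation.ReflTransGen Step T (NF T) := by
        refine ih (mu T + (NF T \ T).card) ?_ T rfl
        rw [hNF]; omega
      exact Relation.ReflTransGen.head hST (hNF ▸ hT)

lemma toNF (S : Finset Con) : Relation.ReflTransGen Step S (NF S) :=
  toNF_aux _ S rfl

/-- The CHR rewrite system from the Eq/Ord declarations is confluent. -/
theorem eqOrd_chr_confluent :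
    ∀ S S₁ S₂ : Finset Con, Relation.ReflTransGen Step S S₁ →
      Relation.ReflTransGen Step S S₂ →
      ∃ S₃, Relation.ReflTransGen Step S₁ S₃ ∧ Relation.ReflTransGen Step S₂ S₃ := by
  intro S S₁ S₂ h1 h2
  refine ⟨NF S, ?_, ?_⟩
  · have := toNF S₁; rwa [NF_rtc h1] at this
  · have := toNF S₂; rwa [NF_rtc h2] at this

end CHR
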